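/- Let ŵ = π_r s_{i_l}⋯s_{i_1} be a reduced decomposition of an element of the extended affine Weyl group Ŵ and let {α̃^1,…,α̃^l} be its λ-sequence. Suppose α̃^p = β̃ + γ̃ for some 1 ≤ p ≤ l, where each of β̃, γ̃ is either a positive affine root or of the form [0,j] with j a positive integer. Then at least one of β̃, γ̃ belongs to λ(ŵ), and exactly one of β̃, γ̃ equals α̃^{p'} for some p' < p (i.e., occurs strictly before α̃^p in the λ-sequence). -/

import Mathlib

open scoped RealInnerProductSpace Classical

noncomputable section

/-- Euclidean space ℝⁿ. -/
abbrev EV (n : ℕ) := EuclideanSpace ℝ (Fin n)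

/-- ν_α = (α,α)/2. -/
def nuu {n : ℕ} (α : EV n) : ℝ := ⟪α, α⟫ / 2

/-- α^∨ = 2α/(α,α). -/
def coroot {n : ℕ} (α : EV n) : EV n := (2 / ⟪α, α⟫) • α

/-- the reflection s_α. -/
def srefl {n : ℕ} (α : EV n) : EV n → EV n :=
  fun z => z - (2 * ⟪z, α⟫ / ⟪α, α⟫) • α

/-- the affine reflection s_ã attached to ã = [α, ν_α j], acting linearly on ℝⁿ × ℝ. -/
def aRefl {n : ℕ} (p : EV n × ℝ) : EV n × ℝ → EV n × ℝ :=
  fun z => z - (2 * ⟪z.1, p.1⟫ / ⟪p.1, p.1⟫) • p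

/-- the translation element b' ∈ Ŵ, b'([z,ζ]) = [z, ζ − (z,b)]. -/
def transl {n : ℕ} (b : EV n) : EV n × ℝ → EV n × ℝ :=
  fun z => (z.1, z.2 - ⟪z.1, b⟫)

/-- extension of a nonaffine transformation to ℝⁿ × ℝ. -/
def affExt {n : ℕ} (w : EV n → EV n) : EV n × ℝ → EV n × ℝ :=
  fun z => (w z.1, z.2)

/-- An irreducible reduced crystallographic root system in ℝⁿ, with a fixed system of
positive/simple roots, normalized so that (α,α) = 2 for short roots; `hishort` is the
highest short root ϑ and `hiroot` the highest root θ. -/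
structure RootCtx (n : ℕ) where
  R : Finset (EV n)
  pos : Finset (EV n)
  simple : Fin n → EV n
  hishort : EV n
  hiroot : EV n
  nonzero : ∀ α ∈ R, α ≠ (0 : EV n)
  neg_mem : ∀ α ∈ R, -α ∈ R
  reduced : ∀ α ∈ R, ∀ t : ℝ, t • α ∈ R → t = 1 ∨ t = -1
  crys : ∀ α ∈ R, ∀ β ∈ R, ∃ m : ℤ, 2 * ⟪β, α⟫ / ⟪α, α⟫ = (m : ℝ)
  reflect_mem : ∀ α ∈ R, ∀ β ∈ R, β - (2 * ⟪β, α⟫ / ⟪α, α⟫) • α ∈ R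
  span_top : Submodule.span ℝ (R : Set (EV n)) = ⊤
  pos_subset : pos ⊆ R
  pos_iff : ∀ α ∈ R, (α ∈ pos ↔ -α ∉ pos)
  simple_pos : ∀ i, simple i ∈ pos
  simple_inj : Function.Injective simple
  pos_sum : ∀ α ∈ pos, ∃ f : Fin n → ℕ, α = ∑ i, (f i : ℝ) • simple i
  irred : ∀ S : Finset (EV n), S ⊆ R → S.Nonempty →
      (∀ α ∈ S, ∀ β ∈ R, β ∉ S → ⟪α, β⟫ = 0) → S = R
  normalized : ∀ α ∈ R, (∀ β ∈ R, ⟪α, α⟫ ≤ ⟪β, β⟫) → ⟪α, α⟫ = 2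
  hishort_pos : hishort ∈ pos
  hishort_short : ⟪hishort, hishort⟫ = 2
  hishort_high : ∀ α ∈ R, ⟪α, α⟫ = 2 →
      ∃ f : Fin n → ℕ, hishort - α = ∑ i, (f i : ℝ) • simple i
  hiroot_pos : hiroot ∈ pos
  hiroot_high : ∀ α ∈ R, ∃ f : Fin n → ℕ, hiroot - α = ∑ i, (f i : ℝ) • simple i

namespace RootCtx

variable {n : ℕ} (c : RootCtx n)

/-- word in the simple reflections of W; the letters are listed in the order of
application (the first letter of the list acts first), so `[i₁, …, i_l]`
represents s_{i_l} ⋯ s_{i_1}. -/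
def wWord (L : List (Fin n)) : EV n → EV n :=
  L.foldl (fun f i => srefl (c.simple i) ∘ f) id

/-- membership in the Weyl group W. -/
def IsWeyl (w : EV n → EV n) : Prop := ∃ L : List (Fin n), w = c.wWord L

/-- λ(w) = {α ∈ R₊ : w(α) ∈ R₋}. -/
def lamW (w : EV n → EV n) : Finset (EV n) :=
  c.pos.filter (fun α => -(w α) ∈ c.pos)

/-- λ_ν(w). -/
def lamWnu (w : EV n → EV n) (ν : ℝ) : Finset (EV n) :=
  (c.lamW w).filter (fun α => nuu α = ν)

/-- the length l(w) = |λ(w)| of w ∈ W. -/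
def lenW (w : EV n → EV n) : ℕ := (c.lamW w).card

/-- ρ_ν = (1/2) Σ_{α ∈ R₊, ν_α = ν} α. -/
def rho (ν : ℝ) : EV n :=
  (1 / 2 : ℝ) • ∑ α ∈ c.pos.filter (fun α => nuu α = ν), α

/-- ρ_ν^∨ = ρ_ν / ν. -/
def rhoCheck (ν : ℝ) : EV n := ν⁻¹ • c.rho ν

/-- the affine root system R̃ ⊂ ℝⁿ × ℝ. -/
def aR : Set (EV n × ℝ) := {p | ∃ α ∈ c.R, ∃ j : ℤ, p = (α, nuu α * j)}

/-- positive affine roots. -/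
def aPos : Set (EV n × ℝ) :=
  {p | p ∈ c.aR ∧ (0 < p.2 ∨ (p.2 = 0 ∧ p.1 ∈ c.pos))}

/-- negative affine roots. -/
def aNeg : Set (EV n × ℝ) := {p | -p ∈ c.aPos}

/-- the affine simple roots α_0, α_1, …, α_n; the index 0 corresponds to
α₀ = [−ϑ, 1]. -/
def asimple : Fin (n + 1) → EV n × ℝ :=
  fun i => if h : i = 0 then (-c.hishort, (1 : ℝ)) else (c.simple (i.pred h), (0 : ℝ))

/-- the affine simple reflections s_0, s_1, …, s_n. -/
def aS (i : Fin (n + 1)) : EV n × ℝ → EV n × ℝ := aRefl (c.asimple i)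

/-- word in the affine simple reflections (letters in order of application). -/
def affWord (L : List (Fin (n + 1))) : EV n × ℝ → EV n × ℝ :=
  L.foldl (fun f i => c.aS i ∘ f) id

/-- the weight lattice P. -/
def PwSet : Set (EV n) :=
  {b | ∀ i, ∃ m : ℤ, 2 * ⟪b, c.simple i⟫ / ⟪c.simple i, c.simple i⟫ = (m : ℝ)}

/-- the dominant weights P₊. -/
def PplusSet : Set (EV n) :=
  {b | b ∈ c.PwSet ∧ ∀ i, 0 ≤ ⟪b, c.simple i⟫}

/-- membership in the extended affine Weyl group Ŵ = W ⋉ P,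
via the normal form w·b' with w ∈ W and b ∈ P. -/
def IsExtW (f : EV n × ℝ → EV n × ℝ) : Prop :=
  ∃ w b, c.IsWeyl w ∧ b ∈ c.PwSet ∧ f = affExt w ∘ transl b

/-- membership in Π = {π ∈ Ŵ : π(R̃₊) = R̃₊}. -/
def IsPi (f : EV n × ℝ → EV n × ℝ) : Prop :=
  c.IsExtW f ∧ f '' c.aPos = c.aPos

/-- the λ-set λ(ŵ) = R̃₊ ∩ ŵ⁻¹(R̃₋) of an affine transformation. -/
def aLam (f : EV n × ℝ → EV n × ℝ) : Set (EV n × ℝ) :=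
  {p | p ∈ c.aPos ∧ f p ∈ c.aNeg}

/-- the ν-part λ_ν(ŵ). -/
def aLamNu (f : EV n × ℝ → EV n × ℝ) (ν : ℝ) : Set (EV n × ℝ) :=
  {p | p ∈ c.aLam f ∧ nuu p.1 = ν}

/-- the length l(ŵ) = |λ(ŵ)|. -/
def aLen (f : EV n × ℝ → EV n × ℝ) : ℕ := (c.aLam f).ncard

/-- `(π, L)` is a reduced decomposition ŵ = π_r s_{i_l} ⋯ s_{i_1}: π ∈ Π and
the word length is minimal among all such presentations of the same element. -/
def IsReducedA (π : EV n × ℝ → EV n × ℝ) (L : List (Fin (n + 1))) : Prop :=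
  c.IsPi π ∧
    ∀ (π' : EV n × ℝ → EV n × ℝ) (L' : List (Fin (n + 1))),
      c.IsPi π' → π' ∘ c.affWord L' = π ∘ c.affWord L → L.length ≤ L'.length

/-- the λ-sequence α̃¹, α̃², … of a word (0-based indexing):
α̃^{k+1} = s_{i_1} s_{i_2} ⋯ s_{i_k}(α_{i_{k+1}}). -/
def lamSeq (L : List (Fin (n + 1))) (k : Fin L.length) : EV n × ℝ :=
  ((L.take k).foldr (fun i f => c.aS i ∘ f) id) (c.asimple (L.get k))

/-- the λ-sequence of a word in W (0-based indexing). -/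
def lamSeqW (L : List (Fin n)) (k : Fin L.length) : EV n :=
  ((L.take k).foldr (fun i f => srefl (c.simple i) ∘ f) id) (c.simple (L.get k))


lemma aRefl_apply {n : ℕ} (p z : EV n × ℝ) :
    aRefl p z = z - (2 * ⟪z.1, p.1⟫ / ⟪p.1, p.1⟫) • p := rfl

lemma fst_smul' {n : ℕ} (t : ℝ) (p : EV n × ℝ) : (t • p).1 = t • p.1 := rfl
lemma snd_smul' {n : ℕ} (t : ℝ) (p : EV n × ℝ) : (t • p).2 = t * p.2 := rfl

lemma aRefl_fst {n : ℕ} (p z : EV n × ℝ) :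
    (aRefl p z).1 = z.1 - (2 * ⟪z.1, p.1⟫ / ⟪p.1, p.1⟫) • p.1 := rfl

lemma aRefl_snd {n : ℕ} (p z : EV n × ℝ) :
    (aRefl p z).2 = z.2 - (2 * ⟪z.1, p.1⟫ / ⟪p.1, p.1⟫) * p.2 := rfl

lemma aRefl_add {n : ℕ} (p y z : EV n × ℝ) :
    aRefl p (y + z) = aRefl p y + aRefl p z := by
  simp only [aRefl_apply, Prod.fst_add, inner_add_left]
  rw [show 2 * (⟪y.1, p.1⟫ + ⟪z.1, p.1⟫) / ⟪p.1, p.1⟫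
      = 2 * ⟪y.1, p.1⟫ / ⟪p.1, p.1⟫ + 2 * ⟪z.1, p.1⟫ / ⟪p.1, p.1⟫ by ring]
  rw [add_smul]; abel

lemma aRefl_smul {n : ℕ} (p : EV n × ℝ) (t : ℝ) (y : EV n × ℝ) :
    aRefl p (t • y) = t • aRefl p y := by
  simp only [aRefl_apply, fst_smul', real_inner_smul_left, smul_sub, smul_smul]
  rw [show 2 * (t * ⟪y.1, p.1⟫) / ⟪p.1, p.1⟫ = t * (2 * ⟪y.1, p.1⟫ / ⟪p.1, p.1⟫) by ring]

lemma aRefl_neg {n : ℕ} (p y : EV n × ℝ) : aRefl p (-y) = -aRefl p y := by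
  have := aRefl_smul p (-1) y
  simpa using this

lemma aRefl_inner {n : ℕ} (p : EV n × ℝ) (hp : ⟪p.1, p.1⟫ ≠ 0) (y z : EV n × ℝ) :
    ⟪(aRefl p y).1, (aRefl p z).1⟫ = ⟪y.1, z.1⟫ := by
  have hB : ⟪p.1, z.1⟫ = ⟪z.1, p.1⟫ := real_inner_comm _ _
  simp only [aRefl_fst, inner_sub_left, inner_sub_right, real_inner_smul_left,
    real_inner_smul_right, hB]
  set P := ⟪p.1, p.1⟫ with hP
  set B := ⟪y.1, p.1⟫ with hBB
  set C := ⟪z.1, p.1⟫ with hCC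
  field_simp
  ring

lemma aRefl_invol {n : ℕ} (p : EV n × ℝ) (hp : ⟪p.1, p.1⟫ ≠ 0) (z : EV n × ℝ) :
    aRefl p (aRefl p z) = z := by
  have h1 : ⟪(aRefl p z).1, p.1⟫ = -⟪z.1, p.1⟫ := by
    simp only [aRefl_fst, inner_sub_left, real_inner_smul_left]
    set P := ⟪p.1, p.1⟫ with hP
    set B := ⟪z.1, p.1⟫ with hBB
    field_simp
    ring
  rw [aRefl_apply (z := aRefl p z), h1, aRefl_apply]
  have : 2 * -⟪z.1, p.1⟫ / ⟪p.1, p.1⟫ = -(2 * ⟪z.1, p.1⟫ / ⟪p.1, p.1⟫) := by ring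
  rw [this, neg_smul]; abel

lemma aRefl_self {n : ℕ} (p : EV n × ℝ) (hp : ⟪p.1, p.1⟫ ≠ 0) :
    aRefl p p = -p := by
  rw [aRefl_apply]
  rw [mul_div_assoc, div_self hp, mul_one]
  rw [two_smul]; abel

lemma aRefl_zero_snd {n : ℕ} (p : EV n × ℝ) (t : ℝ) :
    aRefl p ((0 : EV n), t) = ((0 : EV n), t) := by
  rw [aRefl_apply]
  simp

/-- "Nice" transformations: additive, ℝ-homogeneous, preserve the inner product of
first components. -/
def Nice {n : ℕ} (g : EV n × ℝ → EV n × ℝ) : Prop :=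
  (∀ y z, g (y + z) = g y + g z) ∧ (∀ (t : ℝ) y, g (t • y) = t • g y) ∧
  (∀ y z, ⟪(g y).1, (g z).1⟫ = ⟪y.1, z.1⟫)

lemma Nice.id' {n : ℕ} : Nice (id : EV n × ℝ → EV n × ℝ) :=
  ⟨fun _ _ => rfl, fun _ _ => rfl, fun _ _ => rfl⟩

lemma Nice.comp {n : ℕ} {g h : EV n × ℝ → EV n × ℝ} (hg : Nice g) (hh : Nice h) :
    Nice (g ∘ h) := by
  exact ⟨fun y z => by simp [Function.comp, hh.1, hg.1],
    fun t y => by simp [Function.comp, hh.2.1, hg.2.1],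
    fun y z => by simp [Function.comp, hg.2.2, hh.2.2]⟩

lemma Nice.aRefl' {n : ℕ} (p : EV n × ℝ) (hp : ⟪p.1, p.1⟫ ≠ 0) : Nice (aRefl p) :=
  ⟨aRefl_add p, aRefl_smul p, aRefl_inner p hp⟩

lemma Nice.neg {n : ℕ} {g : EV n × ℝ → EV n × ℝ} (hg : Nice g) (y : EV n × ℝ) :
    g (-y) = -g y := by
  have := hg.2.1 (-1) y
  simpa using this

lemma Nice.conj {n : ℕ} {g : EV n × ℝ → EV n × ℝ} (hg : Nice g) (p : EV n × ℝ)
    (hp : ⟪p.1, p.1⟫ ≠ 0) (z : EV n × ℝ) :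
    aRefl (g p) (g z) = g (aRefl p z) := by
  rw [aRefl_apply, hg.2.2, aRefl_apply]
  have : g (z - (2 * ⟪z.1, p.1⟫ / ⟪p.1, p.1⟫) • p)
      = g z - (2 * ⟪z.1, p.1⟫ / ⟪p.1, p.1⟫) • g p := by
    rw [sub_eq_add_neg, hg.1, ← neg_smul, hg.2.1, neg_smul, ← sub_eq_add_neg]
  rw [this, hg.2.2]


variable {n : ℕ} (c : RootCtx n)

lemma root_norm_ge {α : EV n} (h : α ∈ c.R) : 2 ≤ ⟪α, α⟫ := by
  obtain ⟨m, hm, hmin⟩ := c.R.exists_min_image (fun β => ⟪β, β⟫)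
    ⟨c.hishort, c.pos_subset c.hishort_pos⟩
  have h2 := c.normalized m hm (fun β hβ => hmin β hβ)
  calc (2 : ℝ) = ⟪m, m⟫ := h2.symm
    _ ≤ ⟪α, α⟫ := hmin α h

lemma root_inner_pos {α : EV n} (h : α ∈ c.R) : 0 < ⟪α, α⟫ :=
  lt_of_lt_of_le (by norm_num) (c.root_norm_ge h)

lemma root_inner_ne {α : EV n} (h : α ∈ c.R) : ⟪α, α⟫ ≠ 0 :=
  ne_of_gt (c.root_inner_pos h)

lemma nuu_ge_one {α : EV n} (h : α ∈ c.R) : 1 ≤ nuu α := by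
  have := c.root_norm_ge h
  unfold nuu; linarith

lemma nuu_pos {α : EV n} (h : α ∈ c.R) : 0 < nuu α :=
  lt_of_lt_of_le one_pos (c.nuu_ge_one h)

lemma simple_mem_R (i : Fin n) : c.simple i ∈ c.R := c.pos_subset (c.simple_pos i)

lemma pos_neg_elim {α : EV n} (hα : α ∈ c.R) (h : α ∉ c.pos) : -α ∈ c.pos := by
  by_contra h'
  exact h ((c.pos_iff α hα).2 h')

lemma neg_not_pos {α : EV n} (hα : α ∈ c.R) (h : α ∈ c.pos) : -α ∉ c.pos :=
  (c.pos_iff α hα).1 h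

lemma simple_span : ⊤ ≤ Submodule.span ℝ (Set.range c.simple) := by
  rw [← c.span_top]
  refine Submodule.span_le.2 ?_
  intro α hα
  have hmem : ∀ β : EV n, β ∈ c.pos → β ∈ Submodule.span ℝ (Set.range c.simple) := by
    intro β hβ
    obtain ⟨f, hf⟩ := c.pos_sum β hβ
    rw [hf]
    exact Submodule.sum_mem _ (fun i _ => Submodule.smul_mem _ _
      (Submodule.subset_span (Set.mem_range_self i)))
  rcases Classical.em (α ∈ c.pos) with h | h
  · exact hmem α h
  · have := hmem (-α) (c.pos_neg_elim hα h)
    rw [show α = -(-α) from (neg_neg α).symm]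
    exact Submodule.neg_mem _ this

lemma simple_indep : LinearIndependent ℝ c.simple := by
  refine linearIndependent_of_top_le_span_of_card_eq_finrank c.simple_span ?_
  simp

lemma coeff_eq {f g : Fin n → ℝ}
    (h : ∑ i, f i • c.simple i = ∑ i, g i • c.simple i) : f = g := by
  have h0 : ∑ i, (f i - g i) • c.simple i = 0 := by
    simp only [sub_smul, Finset.sum_sub_distrib, h, sub_self]
  have hz := Fintype.linearIndependent_iff.1 c.simple_indep (fun i => f i - g i) h0
  funext i
  have h3 : f i - g i = 0 := by simpa using hz i
  linarith

/-- ℕ-combinations of simple roots. -/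
def IsNN (v : EV n) : Prop := ∃ f : Fin n → ℕ, v = ∑ i, (f i : ℝ) • c.simple i

lemma isNN_add {v w : EV n} (hv : c.IsNN v) (hw : c.IsNN w) : c.IsNN (v + w) := by
  obtain ⟨f, hf⟩ := hv; obtain ⟨g, hg⟩ := hw
  exact ⟨fun i => f i + g i, by
    simp only [hf, hg, ← Finset.sum_add_distrib, Nat.cast_add, add_smul]⟩

lemma isNN_nsmul (m : ℕ) {v : EV n} (hv : c.IsNN v) : c.IsNN ((m : ℝ) • v) := by
  obtain ⟨f, hf⟩ := hv
  exact ⟨fun i => m * f i, by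
    simp only [hf, Finset.smul_sum, Nat.cast_mul, mul_smul]⟩

lemma isNN_pos {α : EV n} (h : α ∈ c.pos) : c.IsNN α := c.pos_sum α h

lemma pos_of_NN {α : EV n} (hα : α ∈ c.R) (h : c.IsNN α) : α ∈ c.pos := by
  by_contra hnp
  obtain ⟨g, hg⟩ := c.isNN_pos (c.pos_neg_elim hα hnp)
  obtain ⟨f, hf⟩ := h
  have hsum : ∑ i, ((f i : ℝ) + (g i : ℝ)) • c.simple i = ∑ i, (0 : ℝ) • c.simple i := by
    simp only [add_smul, Finset.sum_add_distrib, ← hf, ← hg, zero_smul,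
      Finset.sum_const_zero, add_neg_cancel]
  have hco := c.coeff_eq hsum
  have hzero : ∀ i, (f i : ℝ) = 0 := by
    intro i
    have := congrFun hco i
    have hf0 : (0:ℝ) ≤ (f i : ℝ) := Nat.cast_nonneg _
    have hg0 : (0:ℝ) ≤ (g i : ℝ) := Nat.cast_nonneg _
    linarith
  have : α = 0 := by
    rw [hf]
    apply Finset.sum_eq_zero
    intro i _
    rw [hzero i, zero_smul]
  exact c.nonzero α hα this

lemma srefl_mem_R {α β : EV n} (hα : α ∈ c.R) (hβ : β ∈ c.R) : srefl α β ∈ c.R :=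
  c.reflect_mem α hα β hβ

lemma srefl_eq_aRefl {n : ℕ} (α x : EV n) :
    srefl α x = (aRefl (α, (0:ℝ)) (x, (0:ℝ))).1 := rfl

lemma srefl_inner {α : EV n} (hα : ⟪α, α⟫ ≠ 0) (x y : EV n) :
    ⟪srefl α x, srefl α y⟫ = ⟪x, y⟫ := by
  rw [srefl_eq_aRefl, srefl_eq_aRefl]
  exact aRefl_inner (α, (0:ℝ)) hα (x, 0) (y, 0)

lemma single_sum (t : ℝ) (i : Fin n) :
    t • c.simple i = ∑ j, (if j = i then t else 0) • c.simple j := by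
  rw [Finset.sum_eq_single i]
  · simp
  · intro b _ hb; simp [hb]
  · intro h; exact absurd (Finset.mem_univ i) h

lemma theta_dominant (i : Fin n) : 0 ≤ ⟪c.hishort, c.simple i⟫ := by
  by_contra h
  push_neg at h
  set t := 2 * ⟪c.hishort, c.simple i⟫ / ⟪c.simple i, c.simple i⟫ with ht
  have htneg : t < 0 :=
    div_neg_of_neg_of_pos (by linarith) (c.root_inner_pos (c.simple_mem_R i))
  have hs : srefl (c.simple i) c.hishort ∈ c.R :=
    c.srefl_mem_R (c.simple_mem_R i) (c.pos_subset c.hishort_pos)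
  have hnorm : ⟪srefl (c.simple i) c.hishort, srefl (c.simple i) c.hishort⟫ = 2 := by
    rw [srefl_inner (c.root_inner_ne (c.simple_mem_R i))]
    exact c.hishort_short
  obtain ⟨f, hf⟩ := c.hishort_high _ hs hnorm
  have hdiff : c.hishort - srefl (c.simple i) c.hishort = t • c.simple i := by
    unfold srefl; rw [← ht]; abel
  rw [hdiff, c.single_sum t i] at hf
  have h4 : (f i : ℝ) = t := by simpa using congrFun (c.coeff_eq hf.symm) i
  have h5 : (0:ℝ) ≤ (f i : ℝ) := Nat.cast_nonneg _
  linarith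

lemma inner_theta_nonneg {α : EV n} (h : α ∈ c.pos) : 0 ≤ ⟪α, c.hishort⟫ := by
  obtain ⟨f, hf⟩ := c.pos_sum α h
  rw [hf, sum_inner]
  apply Finset.sum_nonneg
  intro i _
  rw [real_inner_smul_left]
  exact mul_nonneg (Nat.cast_nonneg _) (by rw [real_inner_comm]; exact c.theta_dominant i)

lemma srefl_pos {i : Fin n} {α : EV n} (hα : α ∈ c.pos) (hne : α ≠ c.simple i) :
    srefl (c.simple i) α ∈ c.pos := by
  by_contra hnp
  have hαR : α ∈ c.R := c.pos_subset hα
  have hsR : srefl (c.simple i) α ∈ c.R := c.srefl_mem_R (c.simple_mem_R i) hαR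
  obtain ⟨g, hg⟩ := c.isNN_pos (c.pos_neg_elim hsR hnp)
  obtain ⟨f, hf⟩ := c.pos_sum α hα
  set t := 2 * ⟪α, c.simple i⟫ / ⟪c.simple i, c.simple i⟫ with ht
  have hdiff : α + -(srefl (c.simple i) α) = t • c.simple i := by
    unfold srefl; rw [← ht]; abel
  have hsum : ∑ j, ((f j : ℝ) + (g j : ℝ)) • c.simple j
      = ∑ j, (if j = i then t else 0) • c.simple j := by
    rw [← c.single_sum t i, ← hdiff]
    simp only [add_smul, Finset.sum_add_distrib, ← hf, ← hg]
  have hco := c.coeff_eq hsum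
  have hfj : ∀ j, j ≠ i → (f j : ℝ) = 0 := by
    intro j hj
    have := congrFun hco j
    simp only [if_neg hj] at this
    have hf0 : (0:ℝ) ≤ (f j : ℝ) := Nat.cast_nonneg _
    have hg0 : (0:ℝ) ≤ (g j : ℝ) := Nat.cast_nonneg _
    linarith
  have hαi : α = (f i : ℝ) • c.simple i := by
    rw [hf, Finset.sum_eq_single i]
    · intro b _ hb; rw [hfj b hb, zero_smul]
    · intro h; exact absurd (Finset.mem_univ i) h
  have := c.reduced (c.simple i) (c.simple_mem_R i) (f i : ℝ) (hαi ▸ hαR)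
  rcases this with h1 | h1
  · rw [h1, one_smul] at hαi; exact hne hαi
  · have : (0:ℝ) ≤ (f i : ℝ) := Nat.cast_nonneg _
    rw [h1] at this; linarith


lemma asimple_zero : c.asimple (0 : Fin (n + 1)) = (-c.hishort, 1) := by
  unfold asimple; rw [dif_pos rfl]

lemma asimple_ne {i : Fin (n + 1)} (h : i ≠ 0) :
    c.asimple i = (c.simple (i.pred h), 0) := by
  unfold asimple; rw [dif_neg h]

lemma asimple_fst_mem (i : Fin (n + 1)) : (c.asimple i).1 ∈ c.R := by
  by_cases h : i = 0
  · subst h; rw [c.asimple_zero]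
    exact c.neg_mem _ (c.pos_subset c.hishort_pos)
  · rw [c.asimple_ne h]; exact c.simple_mem_R _

lemma asimple_inner_ne (i : Fin (n + 1)) :
    ⟪(c.asimple i).1, (c.asimple i).1⟫ ≠ 0 :=
  c.root_inner_ne (c.asimple_fst_mem i)

lemma nice_aS (i : Fin (n + 1)) : Nice (c.aS i) :=
  Nice.aRefl' _ (c.asimple_inner_ne i)

lemma aS_invol (i : Fin (n + 1)) (z : EV n × ℝ) : c.aS i (c.aS i z) = z :=
  aRefl_invol _ (c.asimple_inner_ne i) z

lemma aS_asimple (i : Fin (n + 1)) : c.aS i (c.asimple i) = -c.asimple i :=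
  aRefl_self _ (c.asimple_inner_ne i)

lemma asimple_mem_aPos (i : Fin (n + 1)) : c.asimple i ∈ c.aPos := by
  by_cases h : i = 0
  · subst h; rw [c.asimple_zero]
    refine ⟨⟨-c.hishort, c.neg_mem _ (c.pos_subset c.hishort_pos), 1, ?_⟩, Or.inl one_pos⟩
    have h1 : nuu (-c.hishort : EV n) = 1 := by
      unfold nuu; rw [inner_neg_neg, c.hishort_short]; norm_num
    rw [h1]; norm_num
  · rw [c.asimple_ne h]
    refine ⟨⟨c.simple (i.pred h), c.simple_mem_R (i.pred h), 0, ?_⟩,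
      Or.inr ⟨rfl, c.simple_pos _⟩⟩
    norm_num

lemma nuu_neg (α : EV n) : nuu (-α) = nuu α := by unfold nuu; rw [inner_neg_neg]

lemma aR_fst_mem {x : EV n × ℝ} (h : x ∈ c.aR) : x.1 ∈ c.R := by
  obtain ⟨α, hα, j, rfl⟩ := h; exact hα

lemma aR_fst_ne {x : EV n × ℝ} (h : x ∈ c.aR) : x.1 ≠ 0 :=
  c.nonzero _ (c.aR_fst_mem h)

lemma aR_neg {x : EV n × ℝ} (h : x ∈ c.aR) : -x ∈ c.aR := by
  obtain ⟨α, hα, j, rfl⟩ := h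
  refine ⟨-α, c.neg_mem α hα, -j, ?_⟩
  rw [nuu_neg]
  apply Prod.ext
  · rfl
  · simp only [Prod.snd_neg]; push_cast; ring

lemma aPos_aR {x : EV n × ℝ} (h : x ∈ c.aPos) : x ∈ c.aR := h.1

lemma aNeg_iff {x : EV n × ℝ} : x ∈ c.aNeg ↔ -x ∈ c.aPos := Iff.rfl

lemma aNeg_aR {x : EV n × ℝ} (h : x ∈ c.aNeg) : x ∈ c.aR := by
  have := c.aR_neg (c.aPos_aR h)
  rwa [neg_neg] at this

lemma aPos_aNeg_disj {x : EV n × ℝ} (h1 : x ∈ c.aPos) (h2 : x ∈ c.aNeg) : False := by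
  obtain ⟨hR1, hp1⟩ := h1
  obtain ⟨hR2, hp2⟩ := h2
  simp only [Prod.fst_neg, Prod.snd_neg] at hp2
  rcases hp1 with h | ⟨hz1, hm1⟩ <;> rcases hp2 with h' | ⟨hz2, hm2⟩
  · linarith
  · linarith
  · linarith
  · exact c.neg_not_pos (c.aR_fst_mem hR1) hm1 hm2

lemma aR_pos_or_neg {x : EV n × ℝ} (h : x ∈ c.aR) : x ∈ c.aPos ∨ x ∈ c.aNeg := by
  rcases lt_trichotomy x.2 0 with hlt | heq | hgt
  · right
    refine ⟨c.aR_neg h, Or.inl ?_⟩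
    simp only [Prod.snd_neg]; linarith
  · rcases Classical.em (x.1 ∈ c.pos) with hp | hp
    · exact Or.inl ⟨h, Or.inr ⟨heq, hp⟩⟩
    · right
      refine ⟨c.aR_neg h, Or.inr ⟨?_, ?_⟩⟩
      · simp only [Prod.snd_neg]; linarith
      · simp only [Prod.fst_neg]
        exact c.pos_neg_elim (c.aR_fst_mem h) hp
  · exact Or.inl ⟨h, Or.inl hgt⟩

lemma aPos_of_pos_snd {x : EV n × ℝ} (h : x ∈ c.aR) (h2 : 0 < x.2) : x ∈ c.aPos :=
  ⟨h, Or.inl h2⟩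

lemma aPos_of_zero_snd {x : EV n × ℝ} (h : x ∈ c.aR) (h2 : x.2 = 0) (h3 : x.1 ∈ c.pos) :
    x ∈ c.aPos := ⟨h, Or.inr ⟨h2, h3⟩⟩

lemma inner_eq_nuu_int {α β : EV n} (hα : α ∈ c.R) (hβ : β ∈ c.R) :
    ∃ m : ℤ, ⟪β, α⟫ = nuu α * m := by
  obtain ⟨m, hm⟩ := c.crys α hα β hβ
  refine ⟨m, ?_⟩
  have hne := c.root_inner_ne hα
  unfold nuu
  set A := ⟪α, α⟫ with hA
  set B := ⟪β, α⟫ with hB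
  field_simp at hm
  linarith

lemma aS_zero_apply (x : EV n × ℝ) :
    c.aS (0 : Fin (n+1)) x
      = (x.1 - ⟪x.1, c.hishort⟫ • c.hishort, x.2 + ⟪x.1, c.hishort⟫) := by
  unfold aS
  rw [c.asimple_zero]
  have hc : 2 * ⟪x.1, (-c.hishort : EV n)⟫ / ⟪(-c.hishort : EV n), -c.hishort⟫
      = -⟪x.1, c.hishort⟫ := by
    rw [inner_neg_right, inner_neg_neg, c.hishort_short]; ring
  apply Prod.ext
  · rw [aRefl_fst]
    simp only [hc]
    rw [neg_smul, smul_neg, neg_neg]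
  · rw [aRefl_snd]
    simp only [hc]
    ring

lemma aS_ne_apply {i : Fin (n+1)} (h : i ≠ 0) (x : EV n × ℝ) :
    c.aS i x = (srefl (c.simple (i.pred h)) x.1, x.2) := by
  unfold aS
  rw [c.asimple_ne h]
  apply Prod.ext
  · rw [aRefl_fst]; rfl
  · rw [aRefl_snd]; simp

lemma aS_mem_aR (i : Fin (n+1)) {x : EV n × ℝ} (hx : x ∈ c.aR) : c.aS i x ∈ c.aR := by
  obtain ⟨α, hα, j, rfl⟩ := hx
  have hϑR : c.hishort ∈ c.R := c.pos_subset c.hishort_pos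
  by_cases h : i = 0
  · subst h
    rw [c.aS_zero_apply]
    obtain ⟨m₂, hm₂⟩ := c.inner_eq_nuu_int hα hϑR
    have hα' : α - ⟪α, c.hishort⟫ • c.hishort ∈ c.R := by
      have := c.reflect_mem c.hishort hϑR α hα
      rwa [show 2 * ⟪α, c.hishort⟫ / ⟪c.hishort, c.hishort⟫ = ⟪α, c.hishort⟫ by
        rw [c.hishort_short]; ring] at this
    refine ⟨α - ⟪α, c.hishort⟫ • c.hishort, hα', j + m₂, ?_⟩
    have hnuu : nuu (α - ⟪α, c.hishort⟫ • c.hishort) = nuu α := by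
      unfold nuu
      congr 1
      have := srefl_inner (c.root_inner_ne hϑR) α α
      unfold srefl at this
      rwa [show 2 * ⟪α, c.hishort⟫ / ⟪c.hishort, c.hishort⟫ = ⟪α, c.hishort⟫ by
        rw [c.hishort_short]; ring] at this
    apply Prod.ext
    · rfl
    · show nuu α * j + ⟪α, c.hishort⟫ = _
      rw [hnuu]
      have : ⟪α, c.hishort⟫ = nuu α * m₂ := by rw [real_inner_comm]; exact hm₂
      rw [this]; push_cast; ring
  · rw [c.aS_ne_apply h]
    refine ⟨srefl (c.simple (i.pred h)) α, c.srefl_mem_R (c.simple_mem_R _) hα, j, ?_⟩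
    have hnuu : nuu (srefl (c.simple (i.pred h)) α) = nuu α := by
      unfold nuu; rw [srefl_inner (c.root_inner_ne (c.simple_mem_R _))]
    apply Prod.ext
    · rfl
    · show nuu α * j = _
      rw [hnuu]

lemma aS_pos_of_ne (i : Fin (n + 1)) {x : EV n × ℝ} (hx : x ∈ c.aPos)
    (hne : x ≠ c.asimple i) : c.aS i x ∈ c.aPos := by
  obtain ⟨hxR, hxp⟩ := hx
  have hyR : c.aS i x ∈ c.aR := c.aS_mem_aR i hxR
  by_cases h : i = 0
  case neg =>
    rw [c.aS_ne_apply h] at hyR ⊢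
    rcases hxp with hpos | ⟨hz, hp⟩
    · exact c.aPos_of_pos_snd hyR hpos
    · refine c.aPos_of_zero_snd hyR hz ?_
      refine c.srefl_pos hp ?_
      intro heq
      exact hne (by rw [c.asimple_ne h]; exact Prod.ext heq hz)
  case pos =>
    subst h
    obtain ⟨α, hα, j, rfl⟩ := hxR
    have hϑR : c.hishort ∈ c.R := c.pos_subset c.hishort_pos
    have hν1 : 1 ≤ nuu α := c.nuu_ge_one hα
    have hνpos : 0 < nuu α := by linarith
    have hαα : ⟪α, α⟫ = 2 * nuu α := by unfold nuu; ring
    rw [c.aS_zero_apply] at hyR ⊢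
    set m := ⟪α, c.hishort⟫ with hmdef
    -- integrality
    obtain ⟨mi, hmi⟩ := c.inner_eq_nuu_int hϑR hα
    have hnuϑ : nuu c.hishort = 1 := by unfold nuu; rw [c.hishort_short]; norm_num
    have hmint : m = (mi : ℝ) := by rw [hmdef, hmi, hnuϑ, one_mul]
    obtain ⟨m₂, hm₂⟩ := c.inner_eq_nuu_int hα hϑR
    have hm₂' : m = nuu α * m₂ := by rw [hmdef, real_inner_comm]; exact hm₂
    -- Cauchy-Schwarz
    have hcs : m * m ≤ 4 * nuu α := by
      have h1 := real_inner_mul_inner_self_le α c.hishort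
      rw [← hmdef, hαα, c.hishort_short] at h1
      linarith
    -- case split on j
    have hjcases : (1 ≤ j ∧ 0 < nuu α * j) ∨ (j = 0 ∧ α ∈ c.pos) := by
      rcases hxp with hpos | ⟨hz, hp⟩
      · have hpos' : 0 < nuu α * (j : ℝ) := hpos
        have hj : (0 : ℝ) < (j : ℝ) := by nlinarith
        have hj' : 0 < j := by exact_mod_cast hj
        exact Or.inl ⟨hj', hpos'⟩
      · have hz' : nuu α * (j : ℝ) = 0 := hz
        have hj : (j : ℝ) = 0 := by
          rcases mul_eq_zero.1 hz' with h' | h'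
          · exact absurd h' (ne_of_gt hνpos)
          · exact h'
        exact Or.inr ⟨by exact_mod_cast hj, hp⟩
    rcases hjcases with ⟨hj1, hjpos⟩ | ⟨hj0, hp⟩
    · -- j ≥ 1
      have hj1' : (1 : ℝ) ≤ (j : ℝ) := by exact_mod_cast hj1
      rcases lt_trichotomy (nuu α * (j : ℝ) + m) 0 with hneg | hzero | hpos2
      · -- contradiction: x must have been α₀
        exfalso
        have hmm : (m₂ : ℝ) < -(j : ℝ) := by
          rw [hm₂'] at hneg
          nlinarith
        have hm₂j : m₂ ≤ -j - 1 := by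
          have : (m₂ : ℝ) < (-j : ℤ) := by push_cast; linarith
          have := (Int.lt_iff_add_one_le).1 (by exact_mod_cast this)
          omega
        have hm₂j' : (m₂ : ℝ) ≤ -(j:ℝ) - 1 := by exact_mod_cast hm₂j
        have hmle : m ≤ -2 * nuu α := by
          rw [hm₂']
          nlinarith
        have hν : nuu α = 1 := by nlinarith
        have hm2 : m = -2 := by nlinarith
        have hsum0 : α + c.hishort = 0 := by
          have hexp := real_inner_add_add_self α c.hishort
          rw [← hmdef, hαα, c.hishort_short, hν, hm2] at hexp
          have : ⟪α + c.hishort, α + c.hishort⟫ = 0 := by rw [hexp]; ring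
          exact inner_self_eq_zero.1 this
        have hαϑ : α = -c.hishort := eq_neg_of_add_eq_zero_left hsum0
        have hj : j = 1 := by
          have hm₂2 : (m₂ : ℝ) = -2 := by
            rw [hm₂', hν, one_mul] at hm2; exact_mod_cast hm2
          have : m₂ = -2 := by exact_mod_cast hm₂2
          omega
        apply hne
        rw [c.asimple_zero]
        refine Prod.ext hαϑ ?_
        show nuu α * (j : ℝ) = 1
        rw [hν, hj]; norm_num
      · -- second coordinate of the image is 0
        refine c.aPos_of_zero_snd hyR hzero ?_
        show α - m • c.hishort ∈ c.pos
        have hmeq : m = -(nuu α * (j : ℝ)) := by linarith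
        have hmneg : m < 0 := by nlinarith
        have hαnp : α ∉ c.pos := by
          intro hp
          have := c.inner_theta_nonneg hp
          rw [← hmdef] at this
          linarith
        have hβpos : -α ∈ c.pos := c.pos_neg_elim hα hαnp
        rcases eq_or_lt_of_le hν1 with hν | hν
        · -- short α
          have hν' : nuu α = 1 := hν.symm
          have hmj : m = -(j : ℝ) := by rw [hmeq, hν', one_mul]
          have hcs4 : m * m ≤ 4 := by linarith [hcs, hν']
          have hjj : (j : ℝ) * (j : ℝ) ≤ 4 := by nlinarith [hcs4, hmj]
          have hj2 : (j : ℝ) ≤ 2 := by nlinarith [sq_nonneg ((j : ℝ) - 2)]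
          have hj2' : j ≤ 2 := by exact_mod_cast hj2
          interval_cases j
          · -- j = 1, m = -1
            have hm1 : m = -1 := by rw [hmeq, hν']; norm_num
            have hnegnorm : ⟪(-α : EV n), -α⟫ = 2 := by
              rw [inner_neg_neg, hαα, hν']; norm_num
            obtain ⟨f, hf⟩ := c.hishort_high (-α) (c.neg_mem α hα) hnegnorm
            apply c.pos_of_NN (c.aR_fst_mem hyR)
            refine ⟨f, ?_⟩
            rw [← hf, hm1]
            module
          · -- j = 2, m = -2
            have hm2 : m = -2 := by rw [hmeq, hν']; norm_num
            have hsum0 : α + c.hishort = 0 := by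
              have hexp := real_inner_add_add_self α c.hishort
              rw [← hmdef, hαα, c.hishort_short, hν', hm2] at hexp
              have : ⟪α + c.hishort, α + c.hishort⟫ = 0 := by rw [hexp]; ring
              exact inner_self_eq_zero.1 this
            have hαϑ : α = -c.hishort := eq_neg_of_add_eq_zero_left hsum0
            have : α - m • c.hishort = c.hishort := by
              rw [hαϑ, hm2]; module
            rw [this]
            exact c.hishort_pos
        · -- long α : nuu α > 1
          have hj2 : j = 1 := by
            by_contra hj2
            have : 2 ≤ j := by omega
            have h2r : (2 : ℝ) ≤ (j : ℝ) := by exact_mod_cast this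
            rw [hmeq] at hcs
            have hνj : nuu α * 2 ≤ nuu α * (j : ℝ) :=
              mul_le_mul_of_nonneg_left h2r hνpos.le
            have h4 : (nuu α * 2) * (nuu α * 2) ≤ (nuu α * (j:ℝ)) * (nuu α * (j:ℝ)) :=
              mul_self_le_mul_self (by positivity) hνj
            nlinarith
          have hmeq' : m = -nuu α := by rw [hmeq, hj2]; norm_num
          -- integrality of nuu α
          have hνint : nuu α = ((-mi : ℤ) : ℝ) := by push_cast; rw [← hmint, hmeq']; ring
          set K : ℕ := (-mi).toNat with hKdef
          have hminonneg : 0 ≤ -mi := by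
            have h0 : (0 : ℝ) ≤ ((-mi : ℤ) : ℝ) := by rw [← hνint]; linarith
            exact_mod_cast h0
          have hKz : (K : ℤ) = -mi := Int.toNat_of_nonneg hminonneg
          have hKr : (K : ℝ) = nuu α := by
            rw [hνint, ← hKz]; push_cast; ring
          have hK2 : 2 ≤ K := by
            have h1 : (1 : ℝ) < (K : ℝ) := by rw [hKr]; exact hν
            have h1' : 1 < K := by exact_mod_cast h1
            omega
          have hϑα : ⟪c.hishort, α⟫ = m := by rw [real_inner_comm]
          have hγR : c.hishort + α ∈ c.R := by
            have hrefl := c.reflect_mem (-α) (c.neg_mem α hα) c.hishort hϑR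
            have hco : 2 * ⟪c.hishort, (-α : EV n)⟫ / ⟪(-α : EV n), -α⟫ = 1 := by
              rw [inner_neg_right, hϑα, inner_neg_neg, hαα, hmeq']
              rw [div_eq_one_iff_eq (by positivity)]
              ring
            rw [hco, one_smul, sub_neg_eq_add] at hrefl
            exact hrefl
          have hγnorm : ⟪c.hishort + α, c.hishort + α⟫ = 2 := by
            have hexp := real_inner_add_add_self c.hishort α
            rw [hϑα, c.hishort_short, hαα, hmeq'] at hexp
            rw [hexp]; ring
          rcases Classical.em (c.hishort + α ∈ c.pos) with hγp | hγp
          · apply c.pos_of_NN (c.aR_fst_mem hyR)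
            have hNN := c.isNN_add (c.isNN_nsmul (K - 1) (c.isNN_pos c.hishort_pos))
              (c.isNN_pos hγp)
            have heq : α - m • c.hishort
                = ((K - 1 : ℕ) : ℝ) • c.hishort + (c.hishort + α) := by
              have h1K : 1 ≤ K := by omega
              have hcast : ((K - 1 : ℕ) : ℝ) = (K : ℝ) - 1 := by
                rw [Nat.cast_sub h1K]
                norm_num
              rw [hcast, hKr, hmeq']
              module
            rw [heq]
            exact hNN
          · have hδp : -(c.hishort + α) ∈ c.pos := c.pos_neg_elim hγR hγp
            have hδnorm : ⟪-(c.hishort + α), -(c.hishort + α)⟫ = 2 := by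
              rw [inner_neg_neg]; exact hγnorm
            obtain ⟨f, hf⟩ := c.hishort_high _ (c.neg_mem _ hγR) hδnorm
            apply c.pos_of_NN (c.aR_fst_mem hyR)
            have hNN := c.isNN_add (c.isNN_nsmul (K - 2) (c.isNN_pos c.hishort_pos))
              ⟨f, hf⟩
            have heq : α - m • c.hishort
                = ((K - 2 : ℕ) : ℝ) • c.hishort + (c.hishort - -(c.hishort + α)) := by
              have hcast : ((K - 2 : ℕ) : ℝ) = (K : ℝ) - 2 := by
                rw [Nat.cast_sub hK2]; norm_num
              rw [hcast, hKr, hmeq']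
              module
            rw [heq]
            exact hNN
      · exact c.aPos_of_pos_snd hyR hpos2
    · -- j = 0 : finite case
      subst hj0
      have hm0 : 0 ≤ m := by
        have := c.inner_theta_nonneg hp
        rw [← hmdef] at this; exact this
      rcases eq_or_lt_of_le hm0 with hm | hm
      · refine c.aPos_of_zero_snd hyR ?_ ?_
        · show nuu α * ((0:ℤ) : ℝ) + m = 0
          rw [← hm]; norm_num
        · show α - m • c.hishort ∈ c.pos
          rw [← hm]; simpa using hp
      · apply c.aPos_of_pos_snd hyR
        show 0 < nuu α * ((0:ℤ) : ℝ) + m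
        norm_num; linarith

lemma affWord_foldl (L : List (Fin (n + 1))) (f : EV n × ℝ → EV n × ℝ) :
    L.foldl (fun g i => c.aS i ∘ g) f = c.affWord L ∘ f := by
  induction L generalizing f with
  | nil => rfl
  | cons i L ih =>
    show L.foldl _ (c.aS i ∘ f) = _
    rw [ih (c.aS i ∘ f)]
    show _ = (List.foldl _ (c.aS i ∘ id) L) ∘ f
    rw [ih (c.aS i ∘ id)]
    rfl

lemma affWord_cons (i : Fin (n + 1)) (L : List (Fin (n + 1))) :
    c.affWord (i :: L) = c.affWord L ∘ c.aS i := by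
  show List.foldl _ (c.aS i ∘ id) L = _
  rw [c.affWord_foldl]
  rfl

lemma affWord_append (A B : List (Fin (n + 1))) :
    c.affWord (A ++ B) = c.affWord B ∘ c.affWord A := by
  unfold affWord
  rw [List.foldl_append]
  exact c.affWord_foldl B _

lemma nice_affWord (L : List (Fin (n + 1))) : Nice (c.affWord L) := by
  induction L with
  | nil => exact Nice.id'
  | cons i L ih =>
    rw [c.affWord_cons]
    exact ih.comp (c.nice_aS i)

lemma affWord_aR (L : List (Fin (n + 1))) {x : EV n × ℝ} (h : x ∈ c.aR) :
    c.affWord L x ∈ c.aR := by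
  induction L generalizing x with
  | nil => exact h
  | cons i L ih =>
    rw [c.affWord_cons]
    exact ih (c.aS_mem_aR i h)

lemma affWord_imag (L : List (Fin (n + 1))) (t : ℝ) :
    c.affWord L ((0 : EV n), t) = ((0 : EV n), t) := by
  induction L with
  | nil => rfl
  | cons i L ih =>
    rw [c.affWord_cons]
    show c.affWord L (c.aS i ((0 : EV n), t)) = _
    rw [show c.aS i ((0 : EV n), t) = ((0 : EV n), t) from aRefl_zero_snd _ t]
    exact ih

/-- inverse word map. -/
def revW (L : List (Fin (n + 1))) : EV n × ℝ → EV n × ℝ :=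
  L.foldr (fun i f => c.aS i ∘ f) id

lemma revW_cons (i : Fin (n + 1)) (L : List (Fin (n + 1))) :
    c.revW (i :: L) = c.aS i ∘ c.revW L := rfl

lemma revW_affWord (L : List (Fin (n + 1))) (z : EV n × ℝ) :
    c.revW L (c.affWord L z) = z := by
  induction L generalizing z with
  | nil => rfl
  | cons i L ih =>
    rw [c.affWord_cons, revW_cons]
    show c.aS i (c.revW L ((c.affWord L) (c.aS i z))) = z
    rw [ih]
    exact c.aS_invol i z

lemma lamSeq_eq (L : List (Fin (n + 1))) (k : Fin L.length) :
    c.lamSeq L k = c.revW (L.take k) (c.asimple (L.get k)) := rfl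

lemma revW_aR (L : List (Fin (n + 1))) {x : EV n × ℝ} (h : x ∈ c.aR) :
    c.revW L x ∈ c.aR := by
  induction L generalizing x with
  | nil => exact h
  | cons i L ih =>
    rw [revW_cons]
    exact c.aS_mem_aR i (ih h)

lemma lamSeq_mem_aR (L : List (Fin (n + 1))) (k : Fin L.length) :
    c.lamSeq L k ∈ c.aR := by
  rw [c.lamSeq_eq]
  exact c.revW_aR _ (c.aPos_aR (c.asimple_mem_aPos _))

lemma affWord_take_lamSeq (L : List (Fin (n + 1))) (k : Fin L.length) :
    c.affWord (L.take k) (c.lamSeq L k) = c.asimple (L.get k) := by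
  rw [c.lamSeq_eq]
  -- affWord ∘ revW = id
  have h : ∀ z, c.affWord (L.take k) (c.revW (L.take k) z) = z := by
    intro z
    induction (L.take (k : ℕ)) generalizing z with
    | nil => rfl
    | cons i M ih =>
      rw [c.affWord_cons, revW_cons]
      show c.affWord M (c.aS i (c.aS i (c.revW M z))) = z
      rw [c.aS_invol]
      exact ih _
  exact h _

lemma take_succ_word (L : List (Fin (n + 1))) (k : ℕ) (hk : k < L.length) :
    c.affWord (L.take (k + 1)) = c.aS (L.get ⟨k, hk⟩) ∘ c.affWord (L.take k) := by
  have h : L.take (k + 1) = L.take k ++ [L.get ⟨k, hk⟩] := by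
    rw [← List.take_concat_get hk]
    simp
  rw [h, c.affWord_append]
  rfl

lemma exists_flip_down (L : List (Fin (n + 1))) (x : EV n × ℝ) (hx : x ∈ c.aR)
    (a b : ℕ) (hab : a ≤ b) (hb : b ≤ L.length)
    (ha : c.affWord (L.take a) x ∈ c.aPos) (hbneg : c.affWord (L.take b) x ∈ c.aNeg) :
    ∃ q, a ≤ q ∧ q < b ∧ ∃ (hq : q < L.length),
      c.affWord (L.take q) x = c.asimple (L.get ⟨q, hq⟩) := by
  obtain ⟨d, rfl⟩ : ∃ d, b = a + d := ⟨b - a, by omega⟩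
  clear hab
  induction d generalizing a with
  | zero =>
    exact absurd hbneg (fun h => c.aPos_aNeg_disj (by simpa using ha) (by simpa using h))
  | succ d ih =>
    by_cases hcase : c.affWord (L.take (a + 1)) x ∈ c.aPos
    · have hb' : (a + 1) + d ≤ L.length := by omega
      have hbneg' : c.affWord (L.take ((a + 1) + d)) x ∈ c.aNeg := by
        have : a + (d + 1) = (a + 1) + d := by omega
        rwa [this] at hbneg
      obtain ⟨q, h1, h2, hq, he⟩ := ih (a + 1) hcase hb' hbneg'
      exact ⟨q, by omega, by omega, hq, he⟩
    · have haq : a < L.length := by omega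
      refine ⟨a, le_refl a, by omega, haq, ?_⟩
      by_contra hne
      apply hcase
      rw [c.take_succ_word L a haq]
      exact c.aS_pos_of_ne _ ha hne

lemma exists_flip_up (L : List (Fin (n + 1))) (x : EV n × ℝ) (hx : x ∈ c.aR)
    (a b : ℕ) (hab : a ≤ b) (hb : b ≤ L.length)
    (ha : c.affWord (L.take a) x ∈ c.aNeg) (hbpos : c.affWord (L.take b) x ∈ c.aPos) :
    ∃ q, a ≤ q ∧ q < b ∧ ∃ (hq : q < L.length),
      c.affWord (L.take q) x = -c.asimple (L.get ⟨q, hq⟩) := by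
  have hnx : -x ∈ c.aR := c.aR_neg hx
  have hneg : ∀ M : List (Fin (n + 1)), c.affWord M (-x) = -(c.affWord M x) :=
    fun M => (c.nice_affWord M).neg x
  have ha' : c.affWord (L.take a) (-x) ∈ c.aPos := by
    rw [hneg]; exact ha
  have hb' : c.affWord (L.take b) (-x) ∈ c.aNeg := by
    rw [hneg, c.aNeg_iff, neg_neg]; exact hbpos
  obtain ⟨q, h1, h2, hq, he⟩ := c.exists_flip_down L (-x) hnx a b hab hb ha' hb'
  refine ⟨q, h1, h2, hq, ?_⟩
  rw [hneg] at he
  rw [← neg_neg (c.affWord (L.take q) x), he]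

lemma deletion (L : List (Fin (n + 1))) (x : EV n × ℝ) (a b : ℕ) (hab : a < b)
    (hb : b < L.length)
    (ha : c.affWord (L.take a) x = c.asimple (L.get ⟨a, by omega⟩))
    (hbe : c.affWord (L.take b) x = -c.asimple (L.get ⟨b, hb⟩)) :
    ∃ L' : List (Fin (n + 1)), L'.length + 2 = L.length ∧ c.affWord L' = c.affWord L := by
  set i := L.get ⟨a, by omega⟩ with hi
  set k := L.get ⟨b, hb⟩ with hk
  set mid := (L.take b).drop (a + 1) with hmid
  set post := L.drop (b + 1) with hpost
  -- decomposition of L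
  have htb : L.take b = (L.take a ++ [i]) ++ mid := by
    have h1 : L.take b = (L.take b).take (a + 1) ++ (L.take b).drop (a + 1) :=
      (List.take_append_drop _ _).symm
    have h2 : (L.take b).take (a + 1) = L.take (a + 1) := by
      rw [List.take_take]
      congr 1
      omega
    have h3 : L.take (a + 1) = L.take a ++ [i] := by
      rw [← List.take_concat_get (show a < L.length by omega)]
      simp [hi]
    rw [h1, h2, h3]
  have hLdec : L = (L.take b ++ [k]) ++ post := by
    have h2 : L.drop b = k :: post := by
      rw [hpost, hk]
      exact (List.drop_eq_getElem_cons hb)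
    calc L = L.take b ++ L.drop b := (List.take_append_drop b L).symm
      _ = L.take b ++ (k :: post) := by rw [h2]
      _ = (L.take b ++ [k]) ++ post := by simp
  -- word maps
  have hWb : c.affWord (L.take b)
      = c.affWord mid ∘ c.aS i ∘ c.affWord (L.take a) := by
    rw [htb, c.affWord_append, c.affWord_append]
    rfl
  -- u(asimple i) = asimple k
  have hu : c.affWord mid (c.asimple i) = c.asimple k := by
    have h1 : c.affWord (L.take b) x = c.affWord mid (c.aS i (c.affWord (L.take a) x)) := by
      rw [hWb]; rfl
    rw [ha, c.aS_asimple, hbe] at h1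
    have h2 := (c.nice_affWord mid).neg (c.asimple i)
    rw [h2] at h1
    have := congrArg Neg.neg h1
    simpa using this.symm
  -- conjugation: aS k ∘ u = u ∘ aS i
  have hconj : ∀ z, c.aS k (c.affWord mid z) = c.affWord mid (c.aS i z) := by
    intro z
    have := (c.nice_affWord mid).conj (c.asimple i) (c.asimple_inner_ne i) z
    rw [hu] at this
    exact this
  refine ⟨L.take a ++ mid ++ post, ?_, ?_⟩
  · have hla : (L.take a).length = a := by
      rw [List.length_take]; omega
    have hlm : mid.length = b - (a + 1) := by
      rw [hmid, List.length_drop, List.length_take]; omega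
    have hlp : post.length = L.length - (b + 1) := by
      rw [hpost, List.length_drop]
    simp only [List.length_append, hla, hlm, hlp]
    omega
  · conv_rhs => rw [hLdec]
    rw [c.affWord_append, c.affWord_append, c.affWord_append, c.affWord_append, htb,
      c.affWord_append, c.affWord_append]
    funext z
    show c.affWord post (c.affWord mid (c.affWord (L.take a) z))
      = c.affWord post (c.affWord [k] (c.affWord mid (c.affWord [i] (c.affWord (L.take a) z))))
    congr 1
    have h1 : ∀ w, c.affWord [i] w = c.aS i w := fun w => rfl
    have h2 : ∀ w, c.affWord [k] w = c.aS k w := fun w => rfl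
    rw [h1, h2, hconj, c.aS_invol]

lemma reduced_lamSeq_neg {π : EV n × ℝ → EV n × ℝ} {L : List (Fin (n + 1))}
    (hred : c.IsReducedA π L) (k q : ℕ) (hk : k < L.length) (hkq : k < q)
    (hq : q ≤ L.length) :
    c.affWord (L.take q) (c.lamSeq L ⟨k, hk⟩) ∈ c.aNeg := by
  set x := c.lamSeq L ⟨k, hk⟩ with hxdef
  have hxR : x ∈ c.aR := c.lamSeq_mem_aR L ⟨k, hk⟩
  have hWk : c.affWord (L.take k) x = c.asimple (L.get ⟨k, hk⟩) :=
    c.affWord_take_lamSeq L ⟨k, hk⟩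
  have hk1 : c.affWord (L.take (k + 1)) x ∈ c.aNeg := by
    rw [c.take_succ_word L k hk]
    show c.aS (L.get ⟨k, hk⟩) (c.affWord (L.take k) x) ∈ c.aNeg
    rw [hWk, c.aS_asimple]
    rw [c.aNeg_iff, neg_neg]
    exact c.asimple_mem_aPos _
  by_contra hcon
  have hq_pos : c.affWord (L.take q) x ∈ c.aPos := by
    rcases c.aR_pos_or_neg (c.affWord_aR _ hxR) with h | h
    · exact h
    · exact absurd h hcon
  obtain ⟨r, hr1, hr2, hrlen, hre⟩ :=
    c.exists_flip_up L x hxR (k + 1) q (by omega) hq hk1 hq_pos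
  obtain ⟨L', hlen, heq⟩ := c.deletion L x k r (by omega) hrlen hWk hre
  have hmin := hred.2 π L' hred.1 (by rw [heq])
  omega

lemma mem_lamSeq_of_neg (L : List (Fin (n + 1))) (x : EV n × ℝ) (hx : x ∈ c.aPos)
    (p : ℕ) (hp : p ≤ L.length)
    (hneg : c.affWord (L.take p) x ∈ c.aNeg) :
    ∃ (q : ℕ) (hq : q < L.length), q < p ∧ c.lamSeq L ⟨q, hq⟩ = x := by
  have h0 : c.affWord (L.take 0) x ∈ c.aPos := hx
  obtain ⟨q, _, hqp, hqlen, he⟩ :=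
    c.exists_flip_down L x (c.aPos_aR hx) 0 p (by omega) hp h0 hneg
  refine ⟨q, hqlen, hqp, ?_⟩
  rw [c.lamSeq_eq, ← he, c.revW_affWord]

lemma aPos_snd_nonneg {y : EV n × ℝ} (hy : y ∈ c.aPos) : 0 ≤ y.2 := by
  rcases hy.2 with h | ⟨h, _⟩
  · linarith
  · linarith

lemma aPos_fst_pos {y : EV n × ℝ} (hy : y ∈ c.aPos) (h0 : y.2 = 0) : y.1 ∈ c.pos := by
  rcases hy.2 with h | ⟨_, h⟩
  · linarith
  · exact h

lemma aPos_snd_cases {y : EV n × ℝ} (hy : y ∈ c.aPos) : y.2 = 0 ∨ 1 ≤ y.2 := by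
  obtain ⟨⟨β, hβ, j, rfl⟩, hp⟩ := hy
  rcases hp with h | ⟨h, _⟩
  · right
    have hνpos : 0 < nuu β := c.nuu_pos hβ
    have hν1 : 1 ≤ nuu β := c.nuu_ge_one hβ
    have hpos : 0 < nuu β * (j : ℝ) := h
    have hj : (0:ℝ) < (j : ℝ) := by nlinarith
    have hj' : 0 < j := by exact_mod_cast hj
    have hj1 : (1:ℝ) ≤ (j : ℝ) := by exact_mod_cast hj'
    show (1:ℝ) ≤ nuu β * (j : ℝ)
    nlinarith
  · exact Or.inl h

lemma norm_two_of_snd_one {y : EV n × ℝ} (hy : y ∈ c.aR) (h1 : y.2 = 1) :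
    ⟪y.1, y.1⟫ = 2 := by
  obtain ⟨β, hβ, j, rfl⟩ := hy
  have hνpos : 0 < nuu β := c.nuu_pos hβ
  have hν1 : 1 ≤ nuu β := c.nuu_ge_one hβ
  have h1' : nuu β * (j : ℝ) = 1 := h1
  have hj : (0:ℝ) < (j : ℝ) := by nlinarith
  have hj' : 0 < j := by exact_mod_cast hj
  have hj1 : (1:ℝ) ≤ (j : ℝ) := by exact_mod_cast hj'
  have hν : nuu β = 1 := by nlinarith
  show ⟪β, β⟫ = 2
  unfold nuu at hν
  linarith

lemma sum_zero_coeffs {F : Fin n → ℕ} {v : EV n} (hv : v = ∑ j, (F j : ℝ) • c.simple j)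
    (hF : ∀ j, (F j : ℝ) = 0) : v = 0 := by
  rw [hv]
  apply Finset.sum_eq_zero
  intro j _
  rw [hF j, zero_smul]

lemma simple_not_sum_pos (i : Fin n) {β γ : EV n} (hβ : β ∈ c.pos) (hγ : γ ∈ c.pos) :
    β + γ ≠ c.simple i := by
  intro heq
  obtain ⟨f, hf⟩ := c.pos_sum β hβ
  obtain ⟨g, hg⟩ := c.pos_sum γ hγ
  have hkey : ∑ j, ((f j : ℝ) + (g j : ℝ)) • c.simple j
      = ∑ j, (if j = i then (1:ℝ) else 0) • c.simple j := by
    have h1 : ∑ j, ((f j : ℝ) + (g j : ℝ)) • c.simple j = β + γ := by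
      simp only [add_smul, Finset.sum_add_distrib, ← hf, ← hg]
    rw [h1, heq, show c.simple i = (1:ℝ) • c.simple i from (one_smul ℝ _).symm,
      c.single_sum 1 i]
  have hco := c.coeff_eq hkey
  have hoff : ∀ j, j ≠ i → f j = 0 ∧ g j = 0 := by
    intro j hj
    have h := congrFun hco j
    simp only [if_neg hj] at h
    have hf0 : (0:ℝ) ≤ (f j : ℝ) := Nat.cast_nonneg _
    have hg0 : (0:ℝ) ≤ (g j : ℝ) := Nat.cast_nonneg _
    constructor
    · have hr : (f j : ℝ) = 0 := by linarith
      exact_mod_cast hr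
    · have hr : (g j : ℝ) = 0 := by linarith
      exact_mod_cast hr
  have hat : f i + g i = 1 := by
    have h := congrFun hco i
    simp only [if_pos rfl] at h
    exact_mod_cast h
  rcases Nat.add_eq_one_iff.1 hat with ⟨h1, h2⟩ | ⟨h1, h2⟩
  · have : β = 0 := c.sum_zero_coeffs hf (fun j => by
      by_cases hj : j = i
      · subst hj; exact_mod_cast congrArg (Nat.cast : ℕ → ℝ) h1
      · exact_mod_cast congrArg (Nat.cast : ℕ → ℝ) (hoff j hj).1)
    exact c.nonzero β (c.pos_subset hβ) this
  · have : γ = 0 := c.sum_zero_coeffs hg (fun j => by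
      by_cases hj : j = i
      · subst hj; exact_mod_cast congrArg (Nat.cast : ℕ → ℝ) h2
      · exact_mod_cast congrArg (Nat.cast : ℕ → ℝ) (hoff j hj).2)
    exact c.nonzero γ (c.pos_subset hγ) this

lemma theta_sum_branch {β' γ' : EV n} (hβ : β' ∈ c.pos) (hγR : γ' ∈ c.R)
    (hγn : ⟪γ', γ'⟫ = 2) (hsum : β' + γ' = -c.hishort) : False := by
  have hεR : -γ' ∈ c.R := c.neg_mem γ' hγR
  have hεn : ⟪(-γ' : EV n), -γ'⟫ = 2 := by rw [inner_neg_neg]; exact hγn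
  obtain ⟨f, hf⟩ := c.hishort_high (-γ') hεR hεn
  obtain ⟨g, hg⟩ := c.pos_sum β' hβ
  have hlin : c.hishort - -γ' + β' = 0 := by
    rw [sub_neg_eq_add]
    have h1 : γ' = -c.hishort - β' := by
      rw [← hsum]; abel
    rw [h1]; abel
  have hkey : ∑ j, ((f j : ℝ) + (g j : ℝ)) • c.simple j = ∑ j, (0:ℝ) • c.simple j := by
    simp only [add_smul, Finset.sum_add_distrib, ← hf, ← hg, zero_smul,
      Finset.sum_const_zero]
    exact hlin
  have hco := c.coeff_eq hkey
  have : β' = 0 := c.sum_zero_coeffs hg (fun j => by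
    have h := congrFun hco j
    have hf0 : (0:ℝ) ≤ (f j : ℝ) := Nat.cast_nonneg _
    have hg0 : (0:ℝ) ≤ (g j : ℝ) := Nat.cast_nonneg _
    linarith)
  exact c.nonzero β' (c.pos_subset hβ) this

lemma asimple_not_sum (i : Fin (n + 1)) {y z : EV n × ℝ} (hy : y ∈ c.aPos)
    (hz : z ∈ c.aPos) : y + z ≠ c.asimple i := by
  intro heq
  have hy2 : 0 ≤ y.2 := c.aPos_snd_nonneg hy
  have hz2 : 0 ≤ z.2 := c.aPos_snd_nonneg hz
  have hsnd : y.2 + z.2 = (c.asimple i).2 := by rw [← heq]; rfl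
  have hfst : y.1 + z.1 = (c.asimple i).1 := by rw [← heq]; rfl
  by_cases h : i = 0
  · subst h
    rw [c.asimple_zero] at hsnd hfst
    have hsnd' : y.2 + z.2 = 1 := hsnd
    rcases c.aPos_snd_cases hy with hy0 | hy1
    · have hz1 : z.2 = 1 := by linarith
      exact c.theta_sum_branch (c.aPos_fst_pos hy hy0)
        (c.aR_fst_mem (c.aPos_aR hz)) (c.norm_two_of_snd_one (c.aPos_aR hz) hz1) hfst
    · rcases c.aPos_snd_cases hz with hz0 | hz1
      · have hy1' : y.2 = 1 := by linarith
        refine c.theta_sum_branch (c.aPos_fst_pos hz hz0)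
          (c.aR_fst_mem (c.aPos_aR hy)) (c.norm_two_of_snd_one (c.aPos_aR hy) hy1') ?_
        rw [add_comm]; exact hfst
      · linarith
  · rw [c.asimple_ne h] at hsnd hfst
    have hsnd' : y.2 + z.2 = 0 := hsnd
    have hy0 : y.2 = 0 := by linarith
    have hz0 : z.2 = 0 := by linarith
    exact c.simple_not_sum_pos _ (c.aPos_fst_pos hy hy0) (c.aPos_fst_pos hz hz0) hfst

lemma neg_asimple_not_sum (i : Fin (n + 1)) {y z : EV n × ℝ} (hy : y ∈ c.aPos)
    (hz : z ∈ c.aPos) : y + z ≠ -c.asimple i := by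
  intro heq
  have hy2 : 0 ≤ y.2 := c.aPos_snd_nonneg hy
  have hz2 : 0 ≤ z.2 := c.aPos_snd_nonneg hz
  have hsnd : y.2 + z.2 = -(c.asimple i).2 := by
    have := congrArg Prod.snd heq; simpa using this
  have hfst : y.1 + z.1 = -(c.asimple i).1 := by
    have := congrArg Prod.fst heq; simpa using this
  by_cases h : i = 0
  · subst h
    rw [c.asimple_zero] at hsnd
    have : y.2 + z.2 = -1 := hsnd
    linarith
  · rw [c.asimple_ne h] at hsnd hfst
    have hsnd' : y.2 + z.2 = -0 := hsnd
    have hy0 : y.2 = 0 := by linarith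
    have hz0 : z.2 = 0 := by linarith
    have hβp := c.aPos_fst_pos hy hy0
    have hγp := c.aPos_fst_pos hz hz0
    obtain ⟨f, hf⟩ := c.pos_sum _ hβp
    obtain ⟨g, hg⟩ := c.pos_sum _ hγp
    have hkey : ∑ j, ((f j : ℝ) + (g j : ℝ)) • c.simple j
        = ∑ j, (if j = i.pred h then (-1 : ℝ) else 0) • c.simple j := by
      have h1 : ∑ j, ((f j : ℝ) + (g j : ℝ)) • c.simple j = y.1 + z.1 := by
        simp only [add_smul, Finset.sum_add_distrib, ← hf, ← hg]
      rw [h1, hfst, show -c.simple (i.pred h) = (-1 : ℝ) • c.simple (i.pred h) by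
        rw [neg_one_smul], c.single_sum (-1) (i.pred h)]
    have hco := congrFun (c.coeff_eq hkey) (i.pred h)
    norm_num at hco
    have hf0 : (0:ℝ) ≤ (f (i.pred h) : ℝ) := Nat.cast_nonneg _
    have hg0 : (0:ℝ) ≤ (g (i.pred h) : ℝ) := Nat.cast_nonneg _
    linarith

lemma imag_shift_neg (i : Fin (n + 1)) {w : EV n × ℝ} (hw : w ∈ c.aR) (j : ℤ)
    (hj : 0 < j) (heq : w = c.asimple i - ((0 : EV n), (j : ℝ))) : w ∈ c.aNeg := by
  have hj1 : (1:ℝ) ≤ (j : ℝ) := by exact_mod_cast hj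
  by_cases h : i = 0
  · subst h
    rw [c.asimple_zero] at heq
    rcases eq_or_lt_of_le hj1 with hj1' | hj1'
    · rw [c.aNeg_iff]
      have hweq : -w = (c.hishort, (0:ℝ)) := by
        rw [heq, ← hj1']
        apply Prod.ext <;> simp
      rw [hweq]
      refine c.aPos_of_zero_snd ⟨c.hishort, c.pos_subset c.hishort_pos, 0, by norm_num⟩
        rfl c.hishort_pos
    · rw [c.aNeg_iff]
      apply c.aPos_of_pos_snd (c.aR_neg hw)
      have : (-w).2 = -(1 - (j:ℝ)) := by rw [heq]; simp
      rw [this]; linarith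
  · rw [c.asimple_ne h] at heq
    rw [c.aNeg_iff]
    apply c.aPos_of_pos_snd (c.aR_neg hw)
    have : (-w).2 = -(0 - (j:ℝ)) := by rw [heq]; simp
    rw [this]; linarith

end RootCtx


open RootCtx in
/-- Let ŵ = π_r s_{i_l}⋯s_{i_1} be a reduced decomposition in Ŵ with
λ-sequence {α̃¹,…,α̃^l}.  If α̃^p = β̃ + γ̃ where each of β̃, γ̃ is either a positive
affine root or of the form [0, j] with j a positive integer, then at least one of β̃, γ̃
belongs to λ(ŵ), and exactly one of β̃, γ̃ occurs strictly before α̃^p in the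
λ-sequence. -/
theorem lamSeq_sum_split {n : ℕ} (c : RootCtx n)
    (π : EV n × ℝ → EV n × ℝ) (L : List (Fin (n + 1)))
    (hred : c.IsReducedA π L)
    (p : Fin L.length) (β γ : EV n × ℝ)
    (hsum : c.lamSeq L p = β + γ)
    (hβ : β ∈ c.aPos ∨ (β.1 = 0 ∧ ∃ j : ℤ, 0 < j ∧ β.2 = (j : ℝ)))
    (hγ : γ ∈ c.aPos ∨ (γ.1 = 0 ∧ ∃ j : ℤ, 0 < j ∧ γ.2 = (j : ℝ))) :
    (∃ k : Fin L.length, c.lamSeq L k = β ∨ c.lamSeq L k = γ) ∧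
      Xor' (∃ k : Fin L.length, k < p ∧ c.lamSeq L k = β)
           (∃ k : Fin L.length, k < p ∧ c.lamSeq L k = γ) := by
  classical
  have hxR : c.lamSeq L p ∈ c.aR := c.lamSeq_mem_aR L p
  have hple : (p : ℕ) ≤ L.length := le_of_lt p.isLt
  have hvx : c.affWord (L.take (p : ℕ)) (c.lamSeq L p) = c.asimple (L.get p) :=
    c.affWord_take_lamSeq L p
  have hnice : Nice (c.affWord (L.take (p : ℕ))) := c.nice_affWord _
  have hsum' : c.affWord (L.take (p : ℕ)) β + c.affWord (L.take (p : ℕ)) γ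
      = c.asimple (L.get p) := by
    rw [← hnice.1, ← hsum]; exact hvx
  have hlamne : ∀ k : Fin L.length, (c.lamSeq L k).1 ≠ 0 :=
    fun k => c.aR_fst_ne (c.lamSeq_mem_aR L k)
  have hbefore : ∀ k : Fin L.length, (k : ℕ) < (p : ℕ) →
      c.affWord (L.take (p : ℕ)) (c.lamSeq L k) ∈ c.aNeg := by
    intro k hk
    have h := c.reduced_lamSeq_neg hred (k : ℕ) (p : ℕ) k.isLt hk hple
    exact h
  rcases hβ with hβP | ⟨hβ1, jβ, hjβ, hβ2⟩
  · rcases hγ with hγP | ⟨hγ1, jγ, hjγ, hγ2⟩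
    · -- both β and γ are real positive affine roots
      have hvβR : c.affWord (L.take (p : ℕ)) β ∈ c.aR :=
        c.affWord_aR _ (c.aPos_aR hβP)
      have hvγR : c.affWord (L.take (p : ℕ)) γ ∈ c.aR :=
        c.affWord_aR _ (c.aPos_aR hγP)
      rcases c.aR_pos_or_neg hvβR with hbP | hbN
      · rcases c.aR_pos_or_neg hvγR with hgP | hgN
        · exact absurd hsum' (c.asimple_not_sum _ hbP hgP)
        · obtain ⟨q, hqlen, hqp, hqe⟩ := c.mem_lamSeq_of_neg L γ hγP (p : ℕ) hple hgN
          refine ⟨⟨⟨q, hqlen⟩, Or.inr hqe⟩, Or.inr ⟨⟨⟨q, hqlen⟩, hqp, hqe⟩, ?_⟩⟩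
          rintro ⟨k, hkp, hke⟩
          have hneg := hbefore k hkp
          rw [hke] at hneg
          exact c.aPos_aNeg_disj hbP hneg
      · obtain ⟨q, hqlen, hqp, hqe⟩ := c.mem_lamSeq_of_neg L β hβP (p : ℕ) hple hbN
        refine ⟨⟨⟨q, hqlen⟩, Or.inl hqe⟩, Or.inl ⟨⟨⟨q, hqlen⟩, hqp, hqe⟩, ?_⟩⟩
        rintro ⟨k, hkp, hke⟩
        have hneg := hbefore k hkp
        rw [hke] at hneg
        exact c.neg_asimple_not_sum (L.get p) hbN hneg (by rw [← neg_add, hsum'])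
    · -- β real, γ imaginary
      have hγpair : γ = ((0 : EV n), (jγ : ℝ)) := Prod.ext hγ1 hγ2
      have hγfix : c.affWord (L.take (p : ℕ)) γ = γ := by
        rw [hγpair]; exact c.affWord_imag _ _
      rw [hγfix] at hsum'
      have hvβ : c.affWord (L.take (p : ℕ)) β = c.asimple (L.get p) - γ :=
        eq_sub_of_add_eq hsum'
      rw [hγpair] at hvβ
      have hvβneg : c.affWord (L.take (p : ℕ)) β ∈ c.aNeg :=
        c.imag_shift_neg (L.get p) (c.affWord_aR _ (c.aPos_aR hβP)) jγ hjγ hvβ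
      obtain ⟨q, hqlen, hqp, hqe⟩ := c.mem_lamSeq_of_neg L β hβP (p : ℕ) hple hvβneg
      refine ⟨⟨⟨q, hqlen⟩, Or.inl hqe⟩, Or.inl ⟨⟨⟨q, hqlen⟩, hqp, hqe⟩, ?_⟩⟩
      rintro ⟨k, hkp, hke⟩
      exact hlamne k (by rw [hke, hγ1])
  · rcases hγ with hγP | ⟨hγ1, jγ, hjγ, hγ2⟩
    · -- β imaginary, γ real
      have hβpair : β = ((0 : EV n), (jβ : ℝ)) := Prod.ext hβ1 hβ2
      have hβfix : c.affWord (L.take (p : ℕ)) β = β := by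
        rw [hβpair]; exact c.affWord_imag _ _
      rw [hβfix] at hsum'
      have hvγ : c.affWord (L.take (p : ℕ)) γ = c.asimple (L.get p) - β := by
        rw [add_comm] at hsum'
        exact eq_sub_of_add_eq hsum'
      rw [hβpair] at hvγ
      have hvγneg : c.affWord (L.take (p : ℕ)) γ ∈ c.aNeg :=
        c.imag_shift_neg (L.get p) (c.affWord_aR _ (c.aPos_aR hγP)) jβ hjβ hvγ
      obtain ⟨q, hqlen, hqp, hqe⟩ := c.mem_lamSeq_of_neg L γ hγP (p : ℕ) hple hvγneg
      refine ⟨⟨⟨q, hqlen⟩, Or.inr hqe⟩, Or.inr ⟨⟨⟨q, hqlen⟩, hqp, hqe⟩, ?_⟩⟩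
      rintro ⟨k, hkp, hke⟩
      exact hlamne k (by rw [hke, hβ1])
    · -- both imaginary: impossible
      exfalso
      apply c.aR_fst_ne hxR
      have h1 : (c.lamSeq L p).1 = β.1 + γ.1 := by
        rw [hsum]; rfl
      rw [h1, hβ1, hγ1, add_zero]
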